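/- Let d ≥ 1, g ≥ 0, and suppose T₁, …, T_d, X₁, …, X_g are bounded operators on a Hilbert space H with each Xⱼ self-adjoint, such that: (1) Σᵢ TᵢTᵢ* + Σⱼ Xⱼ² = I; (2) each Tᵢ is injective; (3) the only operators W₁, …, W_d with Σᵢ TᵢWᵢ = 0 are all zero. If (S₁, …, S_d, Y₁, …, Y_g) are operators on H ⊕ K of block form Sᵢ = [[Tᵢ, Aᵢ],[Bᵢ, Cᵢ]] and Yⱼ = [[Xⱼ, Zⱼ],[Zⱼ*, Wⱼ]] with each Yⱼ self-adjoint, satisfying Σᵢ SᵢSᵢ* + Σⱼ Yⱼ² ≤ I, then all Aᵢ = 0, all Bᵢ = 0, and all Zⱼ = 0 (the dilation is a direct sum). -/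

import Mathlib

open ContinuousLinearMap

variable {H K : Type*} [NormedAddCommGroup H] [InnerProductSpace ℂ H]
  [NormedAddCommGroup K] [InnerProductSpace ℂ K]

/-- The block operator `[[A, B], [C, D]]` on the Hilbert space direct sum `H ⊕ K`. -/
noncomputable def blockOp (A : H →L[ℂ] H) (B : K →L[ℂ] H) (C : H →L[ℂ] K) (D : K →L[ℂ] K) :
    WithLp 2 (H × K) →L[ℂ] WithLp 2 (H × K) :=
  ((WithLp.prodContinuousLinearEquiv 2 ℂ H K).symm : H × K →L[ℂ] WithLp 2 (H × K)) ∘L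
    ((A ∘L ContinuousLinearMap.fst ℂ H K + B ∘L ContinuousLinearMap.snd ℂ H K).prod
      (C ∘L ContinuousLinearMap.fst ℂ H K + D ∘L ContinuousLinearMap.snd ℂ H K)) ∘L
    ((WithLp.prodContinuousLinearEquiv 2 ℂ H K : WithLp 2 (H × K) ≃L[ℂ] H × K) :
      WithLp 2 (H × K) →L[ℂ] H × K)

lemma inner_self_re'' {E : Type*} [NormedAddCommGroup E] [InnerProductSpace ℂ E] (v : E) :
    (inner ℂ v v : ℂ).re = ‖v‖ ^ 2 := by
  simpa using inner_self_eq_norm_sq (𝕜 := ℂ) v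

lemma inner_self_im'' {E : Type*} [NormedAddCommGroup E] [InnerProductSpace ℂ E] (v : E) :
    (inner ℂ v v : ℂ).im = 0 := inner_self_im (𝕜 := ℂ) v

lemma adjoint_zero'' {E F : Type*} [NormedAddCommGroup E] [InnerProductSpace ℂ E]
    [NormedAddCommGroup F] [InnerProductSpace ℂ F] [CompleteSpace E] [CompleteSpace F] :
    adjoint (0 : E →L[ℂ] F) = 0 := by
  ext x
  refine ext_inner_left ℂ fun w => ?_
  rw [adjoint_inner_right]
  simp

lemma blockOp_adjoint' [CompleteSpace H] [CompleteSpace K]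
    (A : H →L[ℂ] H) (B : K →L[ℂ] H) (C : H →L[ℂ] K) (D : K →L[ℂ] K) :
    adjoint (blockOp A B C D) = blockOp (adjoint A) (adjoint C) (adjoint B) (adjoint D) := by
  symm
  rw [eq_adjoint_iff]
  intro x y
  show (inner ℂ (adjoint A x.fst + adjoint C x.snd) y.fst + inner ℂ (adjoint B x.fst + adjoint D x.snd) y.snd : ℂ)
      = inner ℂ x.fst (A y.fst + B y.snd) + inner ℂ x.snd (C y.fst + D y.snd)
  simp only [inner_add_left, inner_add_right, adjoint_inner_left]
  ring

lemma re_inner_sum' {E : Type*} [NormedAddCommGroup E] [InnerProductSpace ℂ E] [CompleteSpace E]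
    {d g : ℕ} (P : Fin d → E →L[ℂ] E) (Q : Fin g → E →L[ℂ] E)
    (hQ : ∀ j, IsSelfAdjoint (Q j)) (x : E) :
    (inner ℂ ((∑ i, P i ∘L adjoint (P i) + ∑ j, Q j ∘L Q j) x) x : ℂ).re
      = (∑ i, ‖adjoint (P i) x‖ ^ 2) + ∑ j, ‖Q j x‖ ^ 2 := by
  have hP : ∀ i, (inner ℂ ((P i ∘L adjoint (P i)) x) x : ℂ)
      = inner ℂ (adjoint (P i) x) (adjoint (P i) x) := by
    intro i; rw [comp_apply, ← adjoint_inner_right]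
  have hQ' : ∀ j, (inner ℂ ((Q j ∘L Q j) x) x : ℂ) = inner ℂ (Q j x) (Q j x) := by
    intro j; rw [comp_apply, ← adjoint_inner_right, (hQ j).adjoint_eq]
  simp only [add_apply, sum_apply, inner_add_left, sum_inner, Complex.add_re, Complex.re_sum,
    hP, hQ', inner_self_re'']

lemma terms_zero' {n m : ℕ} (a : Fin n → ℝ) (b : Fin m → ℝ) (ha : ∀ i, 0 ≤ a i)
    (hb : ∀ j, 0 ≤ b j) (h : (∑ i, a i) + ∑ j, b j ≤ 0) : (∀ i, a i = 0) ∧ ∀ j, b j = 0 := by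
  have hsa : 0 ≤ ∑ i, a i := Finset.sum_nonneg fun i _ => ha i
  have hsb : 0 ≤ ∑ j, b j := Finset.sum_nonneg fun j _ => hb j
  have ha0 : ∑ i, a i = 0 := le_antisymm (by linarith) hsa
  have hb0 : ∑ j, b j = 0 := le_antisymm (by linarith) hsb
  constructor
  · intro i
    exact le_antisymm (ha0 ▸ Finset.single_le_sum (fun i _ => ha i) (Finset.mem_univ i)) (ha i)
  · intro j
    exact le_antisymm (hb0 ▸ Finset.single_le_sum (fun j _ => hb j) (Finset.mem_univ j)) (hb j)

set_option maxHeartbeats 1000000 in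
/-- Theorem 2.8 ('if' direction): the conditions (1)–(3) force any dilation of
`(T₁, …, T_d, X₁, …, X_g)` in the mixed ball `D^{d,g}` to be a direct sum. -/
theorem stmt_3 [CompleteSpace H] [CompleteSpace K] (d g : ℕ) (hd : 1 ≤ d)
    (T : Fin d → H →L[ℂ] H) (X : Fin g → H →L[ℂ] H)
    (hXsa : ∀ j, IsSelfAdjoint (X j))
    (h1 : ∑ i, (T i) ∘L adjoint (T i) + ∑ j, (X j) ∘L (X j) = 1)
    (h2 : ∀ i, Function.Injective (T i))
    (h3 : ∀ W : Fin d → H →L[ℂ] H, ∑ i, (T i) ∘L (W i) = 0 → ∀ i, W i = 0)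
    (A : Fin d → K →L[ℂ] H) (B : Fin d → H →L[ℂ] K) (C : Fin d → K →L[ℂ] K)
    (Z : Fin g → K →L[ℂ] H) (W : Fin g → K →L[ℂ] K)
    (hWsa : ∀ j, IsSelfAdjoint (W j))
    (S : Fin d → WithLp 2 (H × K) →L[ℂ] WithLp 2 (H × K))
    (Y : Fin g → WithLp 2 (H × K) →L[ℂ] WithLp 2 (H × K))
    (hS : ∀ i, S i = blockOp (T i) (A i) (B i) (C i))
    (hY : ∀ j, Y j = blockOp (X j) (Z j) (adjoint (Z j)) (W j))
    (hcontr : (1 - (∑ i, (S i) ∘L adjoint (S i) + ∑ j, (Y j) ∘L (Y j))).IsPositive) :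
    (∀ i, A i = 0) ∧ (∀ i, B i = 0) ∧ (∀ j, Z j = 0) := by
  have hYsa : ∀ j, IsSelfAdjoint (Y j) := by
    intro j
    rw [IsSelfAdjoint, star_eq_adjoint, hY j, blockOp_adjoint', adjoint_adjoint,
      (hXsa j).adjoint_eq, (hWsa j).adjoint_eq]
  have hSadj : ∀ i, adjoint (S i)
      = blockOp (adjoint (T i)) (adjoint (B i)) (adjoint (A i)) (adjoint (C i)) := by
    intro i; rw [hS i, blockOp_adjoint']
  have hH : ∀ h : H, (∑ i, ‖adjoint (T i) h‖ ^ 2) + ∑ j, ‖X j h‖ ^ 2 = ‖h‖ ^ 2 := by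
    intro h
    have := re_inner_sum' T X hXsa h
    rw [h1] at this
    rw [ContinuousLinearMap.one_apply, inner_self_re''] at this
    exact this.symm
  -- the master inequality coming from positivity
  have master : ∀ (h : H) (k : K),
      (∑ i, (‖adjoint (T i) h + adjoint (B i) k‖ ^ 2 + ‖adjoint (A i) h + adjoint (C i) k‖ ^ 2))
        + ∑ j, (‖X j h + Z j k‖ ^ 2 + ‖adjoint (Z j) h + W j k‖ ^ 2)
        ≤ ‖h‖ ^ 2 + ‖k‖ ^ 2 := by
    intro h k
    set x : WithLp 2 (H × K) := (WithLp.equiv 2 (H × K)).symm (h, k) with hxdef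
    have hpos := hcontr.2 x
    rw [reApplyInnerSelf_apply] at hpos
    simp only [RCLike.re_to_complex, coe_sub', Pi.sub_apply, one_apply, inner_sub_left, Complex.sub_re] at hpos
    rw [ContinuousLinearMap.one_apply, inner_self_re'', re_inner_sum' S Y hYsa x] at hpos
    have hxn : ‖x‖ ^ 2 = ‖h‖ ^ 2 + ‖k‖ ^ 2 := WithLp.prod_norm_sq_eq_of_L2 x
    have hSn : ∀ i, ‖adjoint (S i) x‖ ^ 2
        = ‖adjoint (T i) h + adjoint (B i) k‖ ^ 2 + ‖adjoint (A i) h + adjoint (C i) k‖ ^ 2 := by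
      intro i
      rw [hSadj i, WithLp.prod_norm_sq_eq_of_L2]
      rfl
    have hYn : ∀ j, ‖Y j x‖ ^ 2
        = ‖X j h + Z j k‖ ^ 2 + ‖adjoint (Z j) h + W j k‖ ^ 2 := by
      intro j
      rw [hY j, WithLp.prod_norm_sq_eq_of_L2]
      rfl
    rw [hxn] at hpos
    calc (∑ i, (‖adjoint (T i) h + adjoint (B i) k‖ ^ 2 + ‖adjoint (A i) h + adjoint (C i) k‖ ^ 2))
          + ∑ j, (‖X j h + Z j k‖ ^ 2 + ‖adjoint (Z j) h + W j k‖ ^ 2)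
        = (∑ i, ‖adjoint (S i) x‖ ^ 2) + ∑ j, ‖Y j x‖ ^ 2 := by
          rw [Finset.sum_congr rfl fun i _ => (hSn i).symm,
            Finset.sum_congr rfl fun j _ => (hYn j).symm]
      _ ≤ ‖h‖ ^ 2 + ‖k‖ ^ 2 := by linarith
  -- Step 1: A and Z vanish
  have step1 : ∀ h : H, (∀ i, adjoint (A i) h = 0) ∧ ∀ j, adjoint (Z j) h = 0 := by
    intro h
    have hm := master h 0
    simp only [map_zero, add_zero, norm_zero, zero_pow, OfNat.ofNat_ne_zero, ne_eq,
      not_false_eq_true] at hm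
    rw [Finset.sum_add_distrib, Finset.sum_add_distrib] at hm
    have hh := hH h
    have hkey := terms_zero' (fun i => ‖adjoint (A i) h‖ ^ 2) (fun j => ‖adjoint (Z j) h‖ ^ 2)
      (fun i => by positivity) (fun j => by positivity) (by linarith)
    constructor
    · intro i
      have := hkey.1 i
      simpa using sq_eq_zero_iff.mp this
    · intro j
      have := hkey.2 j
      simpa using sq_eq_zero_iff.mp this
  have hA : ∀ i, A i = 0 := by
    intro i
    have h0 : adjoint (A i) = 0 := ContinuousLinearMap.ext fun h => (step1 h).1 i
    rw [← adjoint_adjoint (A i), h0, adjoint_zero'']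
  have hZ : ∀ j, Z j = 0 := by
    intro j
    have h0 : adjoint (Z j) = 0 := ContinuousLinearMap.ext fun h => (step1 h).2 j
    rw [← adjoint_adjoint (Z j), h0, adjoint_zero'']
  refine ⟨hA, ?_, hZ⟩
  -- Step 2: B vanishes
  set Qop : K →L[ℂ] H := ∑ i, T i ∘L adjoint (B i) with hQdef
  have key : ∀ (t : ℝ) (k : K), 2 * t * ‖Qop k‖ ^ 2 ≤ ‖k‖ ^ 2 := by
    intro t k
    set h : H := (t : ℂ) • Qop k with hhdef
    have hm := master h k
    simp only [hA, hZ, adjoint_zero'', zero_apply, add_zero, zero_add, map_zero] at hm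
    have expand : ∀ i, ‖adjoint (T i) h + adjoint (B i) k‖ ^ 2
        = ‖adjoint (T i) h‖ ^ 2 + 2 * (inner ℂ h ((T i) (adjoint (B i) k)) : ℂ).re
          + ‖adjoint (B i) k‖ ^ 2 := by
      intro i
      rw [@norm_add_sq ℂ, adjoint_inner_left]
      simp
    have hsum1 : ∑ i, (‖adjoint (T i) h + adjoint (B i) k‖ ^ 2 + ‖adjoint (C i) k‖ ^ 2)
        = (∑ i, ‖adjoint (T i) h‖ ^ 2) + 2 * (inner ℂ h (Qop k) : ℂ).re
          + (∑ i, ‖adjoint (B i) k‖ ^ 2) + ∑ i, ‖adjoint (C i) k‖ ^ 2 := by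
      have hq : (inner ℂ h (Qop k) : ℂ) = ∑ i, inner ℂ h ((T i) (adjoint (B i) k)) := by
        rw [hQdef]
        simp [sum_apply, inner_sum]
      rw [hq]
      simp only [expand, Complex.re_sum, Finset.sum_add_distrib, Finset.mul_sum]
    have hsum2 : ∑ j, (‖X j h‖ ^ 2 + ‖W j k‖ ^ 2)
        = (∑ j, ‖X j h‖ ^ 2) + ∑ j, ‖W j k‖ ^ 2 := Finset.sum_add_distrib
    have hre : (inner ℂ h (Qop k) : ℂ).re = t * ‖Qop k‖ ^ 2 := by
      rw [hhdef, inner_smul_left, Complex.conj_ofReal]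
      simp [Complex.mul_re, inner_self_re'', inner_self_im'']
      left; rw [← Complex.ofReal_pow, Complex.ofReal_re]
    have hh := hH h
    have hB0 : 0 ≤ ∑ i, ‖adjoint (B i) k‖ ^ 2 := Finset.sum_nonneg fun i _ => by positivity
    have hC0 : 0 ≤ ∑ i, ‖adjoint (C i) k‖ ^ 2 := Finset.sum_nonneg fun i _ => by positivity
    have hW0 : 0 ≤ ∑ j, ‖W j k‖ ^ 2 := Finset.sum_nonneg fun j _ => by positivity
    rw [hsum1, hsum2, hre] at hm
    linarith
  have hQ0 : Qop = 0 := by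
    ext k
    have hn : ‖Qop k‖ ^ 2 = 0 := by
      by_contra hne
      have hpos : 0 < ‖Qop k‖ ^ 2 := lt_of_le_of_ne (by positivity) (Ne.symm hne)
      have hk := key ((‖k‖ ^ 2 + 1) / (2 * ‖Qop k‖ ^ 2)) k
      have hne2 : (2 * ‖Qop k‖ ^ 2) ≠ 0 := by positivity
      have h2 : 2 * ((‖k‖ ^ 2 + 1) / (2 * ‖Qop k‖ ^ 2)) * ‖Qop k‖ ^ 2 = ‖k‖ ^ 2 + 1 := by
        field_simp
        exact mul_inv_cancel₀ (fun h0 => hne (by rw [h0]; ring))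
      rw [h2] at hk
      linarith
    have : Qop k = 0 := by simpa using sq_eq_zero_iff.mp hn
    simpa using this
  have hBk : ∀ (k : K) (i : Fin d), adjoint (B i) k = 0 := by
    intro k
    by_cases hsub : Subsingleton H
    · intro i; exact Subsingleton.elim _ _
    · have : Nontrivial H := not_subsingleton_iff_nontrivial.mp hsub
      obtain ⟨h0, hh0⟩ := exists_ne (0 : H)
      set Wf : Fin d → H →L[ℂ] H :=
        fun i => (innerSL ℂ h0).smulRight (adjoint (B i) k) with hWf
      have hsum : ∑ i, T i ∘L Wf i = 0 := by
        ext hv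
        have : ∑ i, (T i) ((inner ℂ h0 hv : ℂ) • adjoint (B i) k)
            = (inner ℂ h0 hv : ℂ) • Qop k := by
          rw [hQdef]
          simp [sum_apply, comp_apply, Finset.smul_sum]
        simp only [sum_apply, comp_apply, hWf, smulRight_apply, innerSL_apply_apply, zero_apply]
        rw [this, hQ0]
        simp
      intro i
      have hW0 := h3 Wf hsum i
      have happ : (inner ℂ h0 h0 : ℂ) • adjoint (B i) k = 0 := by
        have := congrArg (fun f : H →L[ℂ] H => f h0) hW0
        simpa [hWf, smulRight_apply, innerSL_apply_apply] using this
      have hin : (inner ℂ h0 h0 : ℂ) ≠ 0 := by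
        rw [inner_self_ne_zero]
        exact hh0
      exact (smul_eq_zero.mp happ).resolve_left hin
  intro i
  have h0 : adjoint (B i) = 0 := ContinuousLinearMap.ext fun k => hBk k i
  rw [← adjoint_adjoint (B i), h0, adjoint_zero'']
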